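/- Suppose Ω ⊆ ℝᵈ is a bounded open set with the κ₀ inner/outer density property: for all x₀ ∈ ∂Ω and 0 < r ≤ |Ω|^{1/d}, one has κ₀ ≤ |Ω ∩ B_r(x₀)|/|B_r(x₀)| ≤ 1 - κ₀. Then for every z ∈ Ω and r > 0, |B_r(z) ∩ Ω| ≤ C(d) κ₀^{-1} |B_{r/2}(z) ∩ Ω|, where C(d) depends only on the dimension d. -/

import Mathlib

set_option maxHeartbeats 1000000


open MeasureTheory Metric

/-- **Doubling estimate from inner/outer boundary density bounds.**
If a bounded open set `Ω ⊆ ℝᵈ` satisfies `κ₀ ≤ |Ω ∩ B_r(x₀)|/|B_r(x₀)| ≤ 1 - κ₀`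
for all `x₀ ∈ ∂Ω` and `0 < r ≤ |Ω|^{1/d}`, then for all `z ∈ Ω` and `r > 0`,
`|B_r(z) ∩ Ω| ≤ C(d) κ₀⁻¹ |B_{r/2}(z) ∩ Ω|` with `C(d)` dimensional. -/
theorem doubling_from_density (d : ℕ) (hd : 0 < d) :
    ∃ C : ℝ, 0 < C ∧
      ∀ (Ω : Set (EuclideanSpace ℝ (Fin d))) (κ₀ : ℝ),
        IsOpen Ω → Bornology.IsBounded Ω → 0 < κ₀ → κ₀ ≤ 1 / 2 →
        (∀ x₀ ∈ frontier Ω, ∀ r : ℝ, 0 < r → r ≤ (volume Ω).toReal ^ ((1 : ℝ) / d) →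
          κ₀ ≤ (volume (Ω ∩ Metric.ball x₀ r)).toReal / (volume (Metric.ball x₀ r)).toReal ∧
          (volume (Ω ∩ Metric.ball x₀ r)).toReal / (volume (Metric.ball x₀ r)).toReal
            ≤ 1 - κ₀) →
        ∀ z ∈ Ω, ∀ r : ℝ, 0 < r →
          (volume (Metric.ball z r ∩ Ω)).toReal
            ≤ C * κ₀⁻¹ * (volume (Metric.ball z (r / 2) ∩ Ω)).toReal := by
  haveI : Nonempty (Fin d) := ⟨⟨0, hd⟩⟩
  haveI : Nontrivial (EuclideanSpace ℝ (Fin d)) := inferInstance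
  have hω : 0 < (volume (ball (0:EuclideanSpace ℝ (Fin d)) 1)).toReal :=
    ENNReal.toReal_pos (measure_ball_pos _ _ one_pos).ne' measure_ball_lt_top.ne
  set ω := (volume (ball (0:EuclideanSpace ℝ (Fin d)) 1)).toReal with hωdef
  -- volume of balls
  have hvol : ∀ (x : EuclideanSpace ℝ (Fin d)) (ρ : ℝ), 0 ≤ ρ → (volume (ball x ρ)).toReal = ρ ^ d * ω := by
    intro x ρ hρ
    rw [Measure.addHaar_ball volume x hρ, ENNReal.toReal_mul,
      ENNReal.toReal_ofReal (by positivity)]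
    rw [finrank_euclideanSpace]
    norm_num
    exact Or.inl hωdef.symm
  refine ⟨4 ^ d + ω⁻¹, by positivity, ?_⟩
  intro Ω κ₀ hΩo hΩb hκ hκ2 hdens z hz r hr
  have hκinv : (1:ℝ) ≤ κ₀⁻¹ := by
    rw [le_inv_comm₀ one_pos hκ]
    linarith
  set ρ : ℝ := r / 2 with hρdef
  have hρ : 0 < ρ := by positivity
  have hΩfin : volume Ω < ⊤ := hΩb.measure_lt_top
  have hΩpos : 0 < volume Ω := hΩo.measure_pos volume ⟨z, hz⟩
  have hvt : 0 < (volume Ω).toReal := ENNReal.toReal_pos hΩpos.ne' hΩfin.ne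
  set R : ℝ := (volume Ω).toReal ^ ((1 : ℝ) / d) with hRdef
  have hR : 0 < R := Real.rpow_pos_of_pos hvt _
  have hRd : R ^ d = (volume Ω).toReal := by
    rw [hRdef, ← Real.rpow_natCast ((volume Ω).toReal ^ ((1:ℝ)/d)) d,
      ← Real.rpow_mul hvt.le, one_div,
      inv_mul_cancel₀ (by exact_mod_cast hd.ne' : (d:ℝ) ≠ 0), Real.rpow_one]
  set A : ℝ := (volume (Metric.ball z (r / 2) ∩ Ω)).toReal with hAdef
  have hA0 : 0 ≤ A := ENNReal.toReal_nonneg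
  -- lower bound on A from the density hypothesis at a frontier point close to z
  have key : ∀ x₀ ∈ frontier Ω, dist z x₀ < ρ / 2 → ∀ t : ℝ, 0 < t → t ≤ ρ / 2 → t ≤ R →
      κ₀ * (t ^ d * ω) ≤ A := by
    intro x₀ hx₀ hdist t ht htρ htR
    have hsub : Ω ∩ ball x₀ t ⊆ ball z (r / 2) ∩ Ω := by
      rintro w ⟨hwΩ, hw⟩
      refine ⟨?_, hwΩ⟩
      rw [mem_ball] at hw ⊢
      calc dist w z ≤ dist w x₀ + dist x₀ z := dist_triangle _ _ _
        _ < t + ρ / 2 := by rw [dist_comm x₀ z]; exact add_lt_add_of_lt_of_le hw (le_of_lt hdist)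
        _ ≤ ρ / 2 + ρ / 2 := by linarith
        _ = r / 2 := by rw [hρdef]; ring
    have hBt : (volume (ball x₀ t)).toReal = t ^ d * ω := hvol x₀ t ht.le
    have hBtpos : 0 < (volume (ball x₀ t)).toReal := by rw [hBt]; positivity
    have hdens' := (hdens x₀ hx₀ t ht htR).1
    have h1 : κ₀ * (volume (ball x₀ t)).toReal ≤ (volume (Ω ∩ ball x₀ t)).toReal := by
      rw [le_div_iff₀ hBtpos] at hdens'
      linarith
    have h2 : (volume (Ω ∩ ball x₀ t)).toReal ≤ A := by
      apply ENNReal.toReal_mono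
      · exact ((measure_mono Set.inter_subset_left).trans_lt measure_ball_lt_top).ne
      · exact measure_mono hsub
    rw [hBt] at h1
    linarith
  -- trivial upper bounds for the LHS
  have hLHS_ball : (volume (Metric.ball z r ∩ Ω)).toReal ≤ r ^ d * ω := by
    rw [← hvol z r hr.le]
    exact ENNReal.toReal_mono measure_ball_lt_top.ne (measure_mono Set.inter_subset_left)
  have hLHS_Ω : (volume (Metric.ball z r ∩ Ω)).toReal ≤ R ^ d := by
    rw [hRd]
    exact ENNReal.toReal_mono hΩfin.ne (measure_mono Set.inter_subset_right)
  -- find the closest frontier point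
  have hΩne : Ω ≠ Set.univ := by
    intro h
    exact NormedSpace.unbounded_univ ℝ (EuclideanSpace ℝ (Fin d)) (h ▸ hΩb)
  obtain ⟨x₀, hx₀, hx₀d⟩ := exists_mem_frontier_infDist_compl_eq_dist hz hΩne
  by_cases hcase : ρ / 2 ≤ dist z x₀
  · -- the ball of radius ρ/2 around z is inside Ω
    have hsub : ball z (ρ / 2) ⊆ ball z (r / 2) ∩ Ω := by
      intro w hw
      rw [mem_ball] at hw
      refine ⟨by rw [mem_ball]; rw [hρdef] at hw; linarith, ?_⟩
      by_contra hwΩ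
      have : Metric.infDist z Ωᶜ ≤ dist z w :=
        Metric.infDist_le_dist_of_mem hwΩ
      rw [hx₀d] at this
      linarith [dist_comm z w]
    have hA : (ρ / 2) ^ d * ω ≤ A := by
      rw [← hvol z (ρ/2) (by positivity)]
      exact ENNReal.toReal_mono
        (((measure_mono Set.inter_subset_left).trans_lt measure_ball_lt_top).ne)
        (measure_mono hsub)
    have hrρ : r ^ d * ω = 4 ^ d * ((ρ / 2) ^ d * ω) := by
      rw [hρdef]; rw [← mul_assoc, ← mul_pow]; ring_nf
    calc (volume (Metric.ball z r ∩ Ω)).toReal ≤ r ^ d * ω := hLHS_ball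
      _ = 4 ^ d * ((ρ / 2) ^ d * ω) := hrρ
      _ ≤ 4 ^ d * A := by
          apply mul_le_mul_of_nonneg_left hA (by positivity)
      _ ≤ (4 ^ d + ω⁻¹) * κ₀⁻¹ * A := by
          apply mul_le_mul_of_nonneg_right _ hA0
          nlinarith [inv_pos.mpr hω, pow_pos (by norm_num : (0:ℝ) < 4) d]
  · push_neg at hcase
    by_cases hcase2 : ρ / 2 ≤ R
    · -- use radius ρ/2 at x₀
      have hA := key x₀ hx₀ hcase (ρ / 2) (by positivity) le_rfl hcase2
      have hrρ : r ^ d * ω = 4 ^ d * ((ρ / 2) ^ d * ω) := by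
        rw [hρdef]; rw [← mul_assoc, ← mul_pow]; ring_nf
      have hstep : (ρ / 2) ^ d * ω ≤ κ₀⁻¹ * A := by
        have := mul_le_mul_of_nonneg_left hA (le_of_lt (inv_pos.mpr hκ))
        rw [← mul_assoc, inv_mul_cancel₀ hκ.ne', one_mul] at this
        exact this
      calc (volume (Metric.ball z r ∩ Ω)).toReal ≤ r ^ d * ω := hLHS_ball
        _ = 4 ^ d * ((ρ / 2) ^ d * ω) := hrρ
        _ ≤ 4 ^ d * (κ₀⁻¹ * A) := mul_le_mul_of_nonneg_left hstep (by positivity)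
        _ ≤ (4 ^ d + ω⁻¹) * κ₀⁻¹ * A := by
            rw [← mul_assoc]
            apply mul_le_mul_of_nonneg_right _ hA0
            apply mul_le_mul_of_nonneg_right _ (le_of_lt (inv_pos.mpr hκ))
            nlinarith [inv_pos.mpr hω]
    · -- use radius R at x₀
      push_neg at hcase2
      have hA := key x₀ hx₀ hcase R hR (le_of_lt hcase2) le_rfl
      have hstep : R ^ d * ω ≤ κ₀⁻¹ * A := by
        have := mul_le_mul_of_nonneg_left hA (le_of_lt (inv_pos.mpr hκ))
        rw [← mul_assoc, inv_mul_cancel₀ hκ.ne', one_mul] at this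
        exact this
      have hstep2 : R ^ d ≤ ω⁻¹ * (κ₀⁻¹ * A) := by
        have := mul_le_mul_of_nonneg_left hstep (le_of_lt (inv_pos.mpr hω))
        calc R ^ d = ω⁻¹ * (R ^ d * ω) := by field_simp
          _ ≤ ω⁻¹ * (κ₀⁻¹ * A) := this
      calc (volume (Metric.ball z r ∩ Ω)).toReal ≤ R ^ d := hLHS_Ω
        _ ≤ ω⁻¹ * (κ₀⁻¹ * A) := hstep2
        _ ≤ (4 ^ d + ω⁻¹) * κ₀⁻¹ * A := by
            rw [← mul_assoc]
            apply mul_le_mul_of_nonneg_right _ hA0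
            apply mul_le_mul_of_nonneg_right _ (le_of_lt (inv_pos.mpr hκ))
            nlinarith [pow_pos (by norm_num : (0:ℝ) < 4) d]
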